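/- If the affine semigroup N·A is the gluing of N·A^{E_1} and N·A^{E_2}, then the cone pos(A) is the direct sum of the cones pos(A^{E_1}) and pos(A^{E_2}). -/

import Mathlib

open scoped BigOperators

/-- The cone of nonnegative rational combinations of elements of `S`. -/
def posSpan {n : ℕ} (S : Set (Fin n → ℚ)) : Set (Fin n → ℚ) :=
  {x | ∃ (k : ℕ) (c : Fin k → ℚ) (b : Fin k → (Fin n → ℚ)),
    (∀ i, 0 ≤ c i) ∧ (∀ i, b i ∈ S) ∧ x = ∑ i, c i • b i}

/-- A rational polyhedral cone: `posSpan` of a finite set. -/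
def IsPolyCone {n : ℕ} (σ : Set (Fin n → ℚ)) : Prop :=
  ∃ B : Finset (Fin n → ℚ), σ = posSpan (B : Set (Fin n → ℚ))

/-- A cone is strongly convex if `σ ∩ (-σ) = {0}`. -/
def StronglyConvex {n : ℕ} (σ : Set (Fin n → ℚ)) : Prop :=
  ∀ x, x ∈ σ → -x ∈ σ → x = 0

/-- dot product in `ℚ^n`. -/
def dotQ {n : ℕ} (c x : Fin n → ℚ) : ℚ := ∑ i, c i * x i

/-- `R` is an extreme ray of `σ`: a one-dimensional face cut out by a
supporting vector `c`. -/
def IsExtremeRay {n : ℕ} (σ R : Set (Fin n → ℚ)) : Prop :=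
  ∃ c : Fin n → ℚ, (∀ x ∈ σ, 0 ≤ dotQ c x) ∧
    R = {x ∈ σ | dotQ c x = 0} ∧
    Module.finrank ℚ (Submodule.span ℚ R) = 1

/-- The dimension of a cone: dimension of its rational linear span. -/
noncomputable def coneDim {n : ℕ} (σ : Set (Fin n → ℚ)) : ℕ :=
  Module.finrank ℚ (Submodule.span ℚ σ)

/-- `σ` is the direct sum of `σ₁` and `σ₂` along `a`. -/
def IsDirectSumAlong {n : ℕ} (σ₁ σ₂ σ : Set (Fin n → ℚ)) (a : Fin n → ℚ) : Prop :=
  a ∈ σ₁ ∩ σ₂ ∧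
  Submodule.span ℚ σ₁ ⊓ Submodule.span ℚ σ₂ = Submodule.span ℚ {a} ∧
  σ = posSpan (σ₁ ∪ σ₂)

/-- `σ` is a direct sum of `σ₁` and `σ₂`. -/
def IsDirectSum {n : ℕ} (σ₁ σ₂ σ : Set (Fin n → ℚ)) : Prop :=
  ∃ a, IsDirectSumAlong σ₁ σ₂ σ a

/-- `a` lies on an extreme ray of `σ`. -/
def OnExtremeRay {n : ℕ} (σ : Set (Fin n → ℚ)) (a : Fin n → ℚ) : Prop :=
  ∃ R, IsExtremeRay σ R ∧ a ∈ R

/-- The ray `ℚ⁺ r`. -/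
def rayOf {n : ℕ} (r : Fin n → ℚ) : Set (Fin n → ℚ) :=
  {x | ∃ q : ℚ, 0 ≤ q ∧ x = q • r}

/-- Coordinatewise cast of an integer vector to a rational vector. -/
def ratify {n : ℕ} (v : Fin n → ℤ) : Fin n → ℚ := fun j => (v j : ℚ)

/-- The subsemigroup (submonoid) of ℤ^n generated by a set. -/
def natSpan {n : ℕ} (A : Set (Fin n → ℤ)) : AddSubmonoid (Fin n → ℤ) :=
  AddSubmonoid.closure A

/-- The subgroup of ℤ^n generated by a set. -/
def intSpan {n : ℕ} (A : Set (Fin n → ℤ)) : AddSubgroup (Fin n → ℤ) :=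
  AddSubgroup.closure A

/-- The semigroup generated by `A` has no invertible elements (is affine). -/
def IsAffineSemigroup {n : ℕ} (A : Set (Fin n → ℤ)) : Prop :=
  ∀ x ∈ natSpan A, -x ∈ natSpan A → x = 0

/-- `ℕ(A₁ ∪ A₂)` is the gluing of `ℕA₁` and `ℕA₂`. -/
def IsGluing {n : ℕ} (A₁ A₂ : Set (Fin n → ℤ)) : Prop :=
  ∃ a : Fin n → ℤ, a ≠ 0 ∧ a ∈ natSpan A₁ ⊓ natSpan A₂ ∧
    intSpan {a} = intSpan A₁ ⊓ intSpan A₂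

/-- `ℕ(A₁ ∪ A₂)` is the s-gluing of `ℕA₁` and `ℕA₂`. -/
def IsSGluing {n : ℕ} (A₁ A₂ : Set (Fin n → ℤ)) : Prop :=
  ∃ a : Fin n → ℤ, intSpan {a} = intSpan A₁ ⊓ intSpan A₂ ∧
    ∃ t : ℕ, 0 < t ∧ (t : ℤ) • a ∈ natSpan A₁ ⊓ natSpan A₂

/-- The gcd of the coordinates of an integer vector. -/
def coordGcd {n : ℕ} (a : Fin n → ℤ) : ℕ :=
  Finset.univ.gcd fun i => (a i).natAbs

lemma posSpan_zero_mem {n : ℕ} (S : Set (Fin n → ℚ)) : (0 : Fin n → ℚ) ∈ posSpan S :=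
  ⟨0, Fin.elim0, Fin.elim0, fun i => i.elim0, fun i => i.elim0, by simp⟩

lemma mem_posSpan_self {n : ℕ} {S : Set (Fin n → ℚ)} {s : Fin n → ℚ} (h : s ∈ S) :
    s ∈ posSpan S :=
  ⟨1, fun _ => 1, fun _ => s, fun _ => zero_le_one, fun _ => h, by simp⟩

lemma posSpan_add_mem {n : ℕ} {S : Set (Fin n → ℚ)} {x y : Fin n → ℚ}
    (hx : x ∈ posSpan S) (hy : y ∈ posSpan S) : x + y ∈ posSpan S := by
  obtain ⟨k, c, b, hc, hb, rfl⟩ := hx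
  obtain ⟨l, d, e, hd, he, rfl⟩ := hy
  refine ⟨k + l, Fin.append c d, Fin.append b e, ?_, ?_, ?_⟩
  · intro i
    refine Fin.addCases (fun i => ?_) (fun i => ?_) i
    · simpa using hc i
    · simpa using hd i
  · intro i
    refine Fin.addCases (fun i => ?_) (fun i => ?_) i
    · simpa using hb i
    · simpa using he i
  · rw [Fin.sum_univ_add]
    simp

lemma posSpan_smul_mem {n : ℕ} {S : Set (Fin n → ℚ)} {q : ℚ} {x : Fin n → ℚ}
    (hq : 0 ≤ q) (hx : x ∈ posSpan S) : q • x ∈ posSpan S := by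
  obtain ⟨k, c, b, hc, hb, rfl⟩ := hx
  exact ⟨k, fun i => q * c i, b, fun i => mul_nonneg hq (hc i), hb, by
    rw [Finset.smul_sum]; simp [mul_smul]⟩

lemma posSpan_min {n : ℕ} {S C : Set (Fin n → ℚ)} (hS : S ⊆ C)
    (h0 : (0 : Fin n → ℚ) ∈ C)
    (hadd : ∀ x ∈ C, ∀ y ∈ C, x + y ∈ C)
    (hsmul : ∀ q : ℚ, 0 ≤ q → ∀ x ∈ C, q • x ∈ C) : posSpan S ⊆ C := by
  rintro x ⟨k, c, b, hc, hb, rfl⟩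
  refine Finset.sum_induction _ (· ∈ C) (fun a b ha hb => hadd a ha b hb) h0 ?_
  intro i _
  exact hsmul (c i) (hc i) (b i) (hS (hb i))

lemma posSpan_mono {n : ℕ} {S T : Set (Fin n → ℚ)} (h : S ⊆ T) : posSpan S ⊆ posSpan T :=
  posSpan_min (fun s hs => mem_posSpan_self (h hs)) (posSpan_zero_mem T)
    (fun _ hx _ hy => posSpan_add_mem hx hy) (fun _ hq _ hx => posSpan_smul_mem hq hx)

lemma posSpan_union_posSpan {n : ℕ} (S T : Set (Fin n → ℚ)) :
    posSpan (posSpan S ∪ posSpan T) = posSpan (S ∪ T) := by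
  apply le_antisymm
  · refine posSpan_min ?_ (posSpan_zero_mem _)
      (fun _ hx _ hy => posSpan_add_mem hx hy) (fun _ hq _ hx => posSpan_smul_mem hq hx)
    rintro x (hx | hx)
    · exact posSpan_mono Set.subset_union_left hx
    · exact posSpan_mono Set.subset_union_right hx
  · apply posSpan_mono
    rintro x (hx | hx)
    · exact Or.inl (mem_posSpan_self hx)
    · exact Or.inr (mem_posSpan_self hx)

lemma ratify_add {n : ℕ} (v w : Fin n → ℤ) : ratify (v + w) = ratify v + ratify w := by
  funext j; simp [ratify]

lemma ratify_zero {n : ℕ} : ratify (0 : Fin n → ℤ) = 0 := by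
  funext j; simp [ratify]

lemma ratify_zsmul {n : ℕ} (k : ℤ) (v : Fin n → ℤ) :
    ratify (k • v) = (k : ℚ) • ratify v := by
  funext j; simp [ratify]

lemma ratify_inj {n : ℕ} {v w : Fin n → ℤ} (h : ratify v = ratify w) : v = w := by
  funext j
  have := congrFun h j
  simp only [ratify] at this
  exact_mod_cast this

lemma ratify_mem_posSpan {n : ℕ} {A : Set (Fin n → ℤ)} {x : Fin n → ℤ}
    (hx : x ∈ natSpan A) : ratify x ∈ posSpan (ratify '' A) := by
  induction hx using AddSubmonoid.closure_induction with
  | mem y hy => exact mem_posSpan_self ⟨y, hy, rfl⟩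
  | zero => rw [ratify_zero]; exact posSpan_zero_mem _
  | add x y _ _ hx hy => rw [ratify_add]; exact posSpan_add_mem hx hy

lemma span_posSpan {n : ℕ} (S : Set (Fin n → ℚ)) :
    Submodule.span ℚ (posSpan S) = Submodule.span ℚ S := by
  apply le_antisymm
  · rw [Submodule.span_le]
    exact posSpan_min Submodule.subset_span (zero_mem _)
      (fun x hx y hy => add_mem hx hy) (fun q _ x hx => Submodule.smul_mem _ q hx)
  · exact Submodule.span_mono (fun s hs => mem_posSpan_self hs)

lemma exists_int_smul_mem {n : ℕ} {A : Set (Fin n → ℤ)} {x : Fin n → ℚ}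
    (hx : x ∈ Submodule.span ℚ (ratify '' A)) :
    ∃ N : ℤ, N ≠ 0 ∧ ∃ w ∈ intSpan A, (N : ℚ) • x = ratify w := by
  induction hx using Submodule.span_induction with
  | mem y hy =>
    obtain ⟨v, hv, rfl⟩ := hy
    exact ⟨1, one_ne_zero, v, AddSubgroup.subset_closure hv, by simp⟩
  | zero => exact ⟨1, one_ne_zero, 0, zero_mem _, by simp [ratify_zero]⟩
  | add x y _ _ hx hy =>
    obtain ⟨N₁, hN₁, w₁, hw₁, he₁⟩ := hx
    obtain ⟨N₂, hN₂, w₂, hw₂, he₂⟩ := hy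
    refine ⟨N₁ * N₂, mul_ne_zero hN₁ hN₂, N₂ • w₁ + N₁ • w₂,
      add_mem (zsmul_mem hw₁ N₂) (zsmul_mem hw₂ N₁), ?_⟩
    rw [ratify_add, ratify_zsmul, ratify_zsmul, ← he₁, ← he₂]
    push_cast
    module
  | smul q x _ hx =>
    obtain ⟨N, hN, w, hw, he⟩ := hx
    refine ⟨N * q.den, mul_ne_zero hN (by exact_mod_cast q.den_ne_zero), q.num • w,
      zsmul_mem hw q.num, ?_⟩
    rw [ratify_zsmul, ← he]
    push_cast
    have hq : (q.den : ℚ) * q = q.num := by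
      rw [mul_comm]; exact_mod_cast Rat.mul_den_eq_num q
    rw [smul_smul, smul_smul]
    congr 1
    linear_combination (N : ℚ) * hq

lemma posSpan_subset_span {n : ℕ} (S : Set (Fin n → ℚ)) :
    posSpan S ⊆ (Submodule.span ℚ S : Submodule ℚ (Fin n → ℚ)) :=
  posSpan_min Submodule.subset_span (zero_mem _)
    (fun x hx y hy => add_mem hx hy) (fun q _ x hx => Submodule.smul_mem _ q hx)

/-- If the affine semigroup `ℕA` is the gluing of `ℕA^{E₁}` and `ℕA^{E₂}`,
then the cone of `A` is the direct sum of the cones of `A^{E₁}` and `A^{E₂}`. -/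
theorem gluing_gives_directSum {n m : ℕ} (A : Fin m → (Fin n → ℤ))
    (haff : IsAffineSemigroup (Set.range A))
    (E₁ E₂ : Set (Fin m)) (hne₁ : E₁.Nonempty) (hne₂ : E₂.Nonempty)
    (hcover : E₁ ∪ E₂ = Set.univ) (hdisj : E₁ ∩ E₂ = ∅)
    (hglue : IsGluing (A '' E₁) (A '' E₂)) :
    IsDirectSum (posSpan (ratify '' (A '' E₁))) (posSpan (ratify '' (A '' E₂)))
      (posSpan (ratify '' Set.range A)) := by
  obtain ⟨a, -, ⟨ha1, ha2⟩, hZ⟩ := hglue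
  refine ⟨ratify a, ⟨ratify_mem_posSpan ha1, ratify_mem_posSpan ha2⟩, ?_, ?_⟩
  · rw [span_posSpan, span_posSpan]
    apply le_antisymm
    · rintro x ⟨hx₁, hx₂⟩
      obtain ⟨N₁, hN₁, w₁, hw₁, he₁⟩ := exists_int_smul_mem hx₁
      obtain ⟨N₂, hN₂, w₂, hw₂, he₂⟩ := exists_int_smul_mem hx₂
      have hkey : N₂ • w₁ = N₁ • w₂ := by
        apply ratify_inj
        rw [ratify_zsmul, ratify_zsmul, ← he₁, ← he₂, smul_smul, smul_smul, mul_comm]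
      have hmem : N₂ • w₁ ∈ intSpan {a} := by
        rw [hZ]
        exact ⟨zsmul_mem hw₁ N₂, hkey ▸ zsmul_mem hw₂ N₁⟩
      obtain ⟨k, hk⟩ := AddSubgroup.mem_closure_singleton.1 hmem
      have heq : ((N₂ : ℚ) * (N₁ : ℚ)) • x = (k : ℚ) • ratify a := by
        rw [mul_smul, he₁, ← ratify_zsmul, ← ratify_zsmul, hk]
      refine Submodule.mem_span_singleton.2 ⟨((N₂ : ℚ) * (N₁ : ℚ))⁻¹ * (k : ℚ), ?_⟩
      have hNN : ((N₂ : ℚ) * (N₁ : ℚ)) ≠ 0 := by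
        exact mul_ne_zero (Int.cast_ne_zero.2 hN₂) (Int.cast_ne_zero.2 hN₁)
      rw [mul_smul, ← heq, smul_smul, inv_mul_cancel₀ hNN, one_smul]
    · rw [Submodule.span_le, Set.singleton_subset_iff]
      exact ⟨posSpan_subset_span _ (ratify_mem_posSpan ha1),
        posSpan_subset_span _ (ratify_mem_posSpan ha2)⟩
  · rw [posSpan_union_posSpan, ← Set.image_union, ← Set.image_union, hcover,
      Set.image_univ]
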